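/- Let 2 ≤ n < m. For C = (c_{ij}) ∈ M_{n×m}(L) write h(C) = τ_n^{n−1}·σ(C) − C·τ_m^{m−1}. For 1 ≤ i ≤ n let α_i = v(unique nonzero entry of row i of τ_n^{n−1}) (so α_1 = 0 and α_i = 1 for i ≥ 2), and for 1 ≤ j ≤ m let β_j = v(unique nonzero entry of column j of τ_m^{m−1}) (so β_j = 1 for j ≤ m−1 and β_m = 0). Define S = {C ∈ M_{n×m}(L) : for all (i,j), the entry h(C)_{ij} is 0 or has valuation ≥ min{α_i, β_j}}. Then S is an additive subgroup of M_{n×m}(L) containing M_{n×m}(𝒪_L), every C ∈ S satisfies c_{i,m} ∈ t^{−1}𝒪_L for 1 ≤ i ≤ n−1, and the map C ↦ (c_{1,m} + 𝒪_L, …, c_{n−1,m} + 𝒪_L) induces a bijection from S / M_{n×m}(𝒪_L) onto (t^{−1}𝒪_L/𝒪_L)^{n−1}. -/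

import Mathlib

open Pointwise

/-- The canonical superbasic element `τ_r`: the `r×r` matrix with `t` in position `(r,1)`,
`1` on the superdiagonal, and `0` elsewhere (1-indexed). -/
def tau {L : Type*} [Field L] (t : L) (r : ℕ) : Matrix (Fin r) (Fin r) L :=
  Matrix.of fun i j =>
    if (i : ℕ) + 1 = (j : ℕ) then 1 else if (i : ℕ) = r - 1 ∧ (j : ℕ) = 0 then t else 0

lemma tau_pow {L : Type*} [Field L] (t : L) (r k : ℕ) (hk : k ≤ r - 1) (i j : Fin r) :
    (tau t r ^ k) i j = if (i : ℕ) + k = (j : ℕ) then 1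
      else if (i : ℕ) + k = (j : ℕ) + r then t else 0 := by
  have hr : 0 < r := i.pos
  induction k generalizing j with
  | zero =>
    simp only [pow_zero, Matrix.one_apply, Nat.add_zero, Fin.ext_iff]
    have : ¬ ((i:ℕ) = (j:ℕ) + r) := by omega
    simp [this]
  | succ k ih =>
    have hk' : k ≤ r - 1 := by omega
    rw [pow_succ, Matrix.mul_apply]
    rcases Nat.eq_zero_or_pos (j : ℕ) with hj | hj
    · -- j = 0 : only l = r-1 contributes
      rw [Finset.sum_eq_single (⟨r-1, by omega⟩ : Fin r)]
      · rw [ih hk']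
        simp only [tau, Matrix.of_apply, Fin.val_mk]
        have h1 : ¬((r - 1 : ℕ) + 1 = (j : ℕ)) := by omega
        have h3 : ¬ ((i:ℕ) + (k+1) = (j:ℕ)) := by omega
        rw [if_neg h1, if_pos (show True ∧ (j:ℕ) = 0 from ⟨trivial, hj⟩), if_neg h3]
        by_cases h4 : (i:ℕ) + k = (r - 1 : ℕ)
        · rw [if_pos h4, one_mul, if_pos (show (i:ℕ)+(k+1) = (j:ℕ)+r by omega)]
        · rw [if_neg h4, if_neg (show ¬((i:ℕ)+k = r-1+r) by omega), zero_mul,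
            if_neg (show ¬((i:ℕ)+(k+1) = (j:ℕ)+r) by omega)]
      · intro l _ hl
        have hl' : (l:ℕ) ≠ r - 1 := fun h => hl (Fin.ext h)
        have h1 : ¬((l:ℕ) + 1 = (j:ℕ)) := by omega
        have h2 : ¬((l:ℕ) = r - 1 ∧ (j:ℕ) = 0) := by omega
        simp [tau, h1, h2]
      · intro h; exact absurd (Finset.mem_univ _) h
    · -- j ≥ 1 : only l = j-1 contributes
      rw [Finset.sum_eq_single (⟨(j:ℕ)-1, by omega⟩ : Fin r)]
      · rw [ih hk']
        simp only [tau, Matrix.of_apply, Fin.val_mk]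
        have h1 : ((j:ℕ) - 1 : ℕ) + 1 = (j : ℕ) := by omega
        rw [if_pos h1, mul_one]
        by_cases h2 : (i:ℕ) + k = (j:ℕ) - 1
        · rw [if_pos h2, if_pos (show (i:ℕ)+(k+1) = (j:ℕ) by omega)]
        · rw [if_neg h2]
          by_cases h3 : (i:ℕ) + k = ((j:ℕ) - 1) + r
          · rw [if_pos h3, if_neg (show ¬((i:ℕ)+(k+1) = (j:ℕ)) by omega),
              if_pos (show (i:ℕ)+(k+1) = (j:ℕ)+r by omega)]
          · rw [if_neg h3, if_neg (show ¬((i:ℕ)+(k+1) = (j:ℕ)) by omega),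
              if_neg (show ¬((i:ℕ)+(k+1) = (j:ℕ)+r) by omega)]
      · intro l _ hl
        have hl' : (l:ℕ) ≠ (j:ℕ) - 1 := fun h => hl (Fin.ext h)
        have h2 : ¬((l:ℕ) + 1 = (j:ℕ)) := by omega
        have h3 : ¬((l:ℕ) = r - 1 ∧ (j:ℕ) = 0) := by omega
        simp [tau, h2, h3]
      · intro h; exact absurd (Finset.mem_univ _) h

lemma hmat_apply {L : Type*} [Field L] (t : L) (σ : L ≃+* L) {n m : ℕ} (hn : 2 ≤ n)
    (hnm : n < m) (C : Matrix (Fin n) (Fin m) L) (i : Fin n) (j : Fin m) :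
    (tau t n ^ (n - 1) * C.map ⇑σ - C * tau t m ^ (m - 1)) i j =
      (if (i:ℕ) = 0 then σ (C ⟨n-1, by omega⟩ j) else t * σ (C ⟨(i:ℕ)-1, by omega⟩ j))
      - (if h : (j:ℕ) = m-1 then C i ⟨0, by omega⟩ else t * C i ⟨(j:ℕ)+1, by omega⟩) := by
  rw [Matrix.sub_apply, Matrix.mul_apply, Matrix.mul_apply]
  congr 1
  · -- A * σC
    by_cases hi : (i:ℕ) = 0
    · rw [Finset.sum_eq_single (⟨n-1, by omega⟩ : Fin n)]
      · rw [tau_pow t n (n-1) le_rfl, if_pos (show (i:ℕ) + (n-1) = ((⟨n-1, by omega⟩ : Fin n):ℕ) by simp [hi]),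
          one_mul, if_pos hi, Matrix.map_apply]
      · intro l _ hl
        have hl' : (l:ℕ) ≠ n - 1 := fun h => hl (Fin.ext h)
        rw [tau_pow t n (n-1) le_rfl,
          if_neg (show ¬((i:ℕ) + (n-1) = (l:ℕ)) by omega),
          if_neg (show ¬((i:ℕ) + (n-1) = (l:ℕ) + n) by omega), zero_mul]
      · intro h; exact absurd (Finset.mem_univ _) h
    · rw [Finset.sum_eq_single (⟨(i:ℕ)-1, by omega⟩ : Fin n)]
      · rw [tau_pow t n (n-1) le_rfl,
          if_neg (show ¬((i:ℕ) + (n-1) = (((⟨(i:ℕ)-1, by omega⟩ : Fin n)):ℕ)) by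
            show ¬((i:ℕ) + (n-1) = (i:ℕ)-1); omega),
          if_pos (show (i:ℕ) + (n-1) = (((⟨(i:ℕ)-1, by omega⟩ : Fin n)):ℕ) + n by
            show (i:ℕ) + (n-1) = (i:ℕ)-1 + n; omega),
          if_neg hi, Matrix.map_apply]
      · intro l _ hl
        have hl' : (l:ℕ) ≠ (i:ℕ) - 1 := fun h => hl (Fin.ext h)
        have hi1 : (i:ℕ) < n := i.isLt
        rw [tau_pow t n (n-1) le_rfl,
          if_neg (show ¬((i:ℕ) + (n-1) = (l:ℕ)) by omega),
          if_neg (show ¬((i:ℕ) + (n-1) = (l:ℕ) + n) by omega), zero_mul]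
      · intro h; exact absurd (Finset.mem_univ _) h
  · -- C * B
    by_cases hj : (j:ℕ) = m-1
    · rw [Finset.sum_eq_single (⟨0, by omega⟩ : Fin m)]
      · rw [tau_pow t m (m-1) le_rfl,
          if_pos (show (((⟨0, by omega⟩ : Fin m)):ℕ) + (m-1) = (j:ℕ) by
            show 0 + (m-1) = (j:ℕ); omega), mul_one, dif_pos hj]
      · intro l _ hl
        have hl' : (l:ℕ) ≠ 0 := fun h => hl (Fin.ext h)
        have hl2 : (l:ℕ) < m := l.isLt
        rw [tau_pow t m (m-1) le_rfl,
          if_neg (show ¬((l:ℕ) + (m-1) = (j:ℕ)) by omega),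
          if_neg (show ¬((l:ℕ) + (m-1) = (j:ℕ) + m) by omega), mul_zero]
      · intro h; exact absurd (Finset.mem_univ _) h
    · have hjm : (j:ℕ) + 1 < m := by have := j.isLt; omega
      rw [Finset.sum_eq_single (⟨(j:ℕ)+1, hjm⟩ : Fin m)]
      · rw [tau_pow t m (m-1) le_rfl,
          if_neg (show ¬((((⟨(j:ℕ)+1, hjm⟩ : Fin m)):ℕ) + (m-1) = (j:ℕ)) by
            show ¬((j:ℕ)+1 + (m-1) = (j:ℕ)); omega),
          if_pos (show (((⟨(j:ℕ)+1, hjm⟩ : Fin m)):ℕ) + (m-1) = (j:ℕ) + m by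
            show (j:ℕ)+1 + (m-1) = (j:ℕ) + m; omega),
          dif_neg hj, mul_comm]
      · intro l _ hl
        have hl' : (l:ℕ) ≠ (j:ℕ) + 1 := fun h => hl (Fin.ext h)
        have hl2 : (l:ℕ) < m := l.isLt
        rw [tau_pow t m (m-1) le_rfl,
          if_neg (show ¬((l:ℕ) + (m-1) = (j:ℕ)) by omega),
          if_neg (show ¬((l:ℕ) + (m-1) = (j:ℕ) + m) by omega), mul_zero]
      · intro h; exact absurd (Finset.mem_univ _) h

section Val
variable {L : Type*} [Field L] (v : L → ℤ) (t : L)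
variable (hv_mul : ∀ x y : L, x ≠ 0 → y ≠ 0 → v (x * y) = v x + v y)
variable (hv_add : ∀ x y : L, x ≠ 0 → y ≠ 0 → x + y ≠ 0 → min (v x) (v y) ≤ v (x + y))
variable (ht0 : t ≠ 0) (ht1 : v t = 1)

/-- valuation at least `c` (or zero). -/
def Vge (c : ℤ) (x : L) : Prop := x = 0 ∨ c ≤ v x

include hv_mul in
lemma v_one' : v 1 = 0 := by
  have := hv_mul 1 1 one_ne_zero one_ne_zero
  simpa using this.symm

include hv_mul in
lemma v_neg' (x : L) (hx : x ≠ 0) : v (-x) = v x := by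
  have hm1 : v (-1 : L) = 0 := by
    have := hv_mul (-1 : L) (-1) (by norm_num) (by norm_num)
    have h1 := v_one' v hv_mul
    simp only [neg_mul, one_mul, neg_neg] at this
    omega
  have := hv_mul (-1 : L) x (by norm_num) hx
  simp only [neg_mul, one_mul] at this
  omega

include hv_mul hv_add in
lemma vge_add (c : ℤ) (x y : L) (hx : Vge v c x) (hy : Vge v c y) : Vge v c (x + y) := by
  rcases hx with rfl | hx; · simpa using hy
  rcases hy with rfl | hy; · rw [add_zero]; exact Or.inr hx
  by_cases hxy : x + y = 0
  · exact Or.inl hxy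
  · rcases (em (x = 0)) with rfl | hx0
    · rw [zero_add]; exact Or.inr hy
    · rcases (em (y = 0)) with rfl | hy0
      · rw [add_zero]; exact Or.inr hx
      · exact Or.inr (le_trans (le_min hx hy) (hv_add x y hx0 hy0 hxy))

include hv_mul in
lemma vge_neg (c : ℤ) (x : L) (hx : Vge v c x) : Vge v c (-x) := by
  rcases hx with rfl | hx; · simp [Vge]
  by_cases h0 : x = 0; · simp [Vge, h0]
  exact Or.inr (by rw [v_neg' v hv_mul x h0]; exact hx)

include hv_mul hv_add in
lemma vge_sub (c : ℤ) (x y : L) (hx : Vge v c x) (hy : Vge v c y) : Vge v c (x - y) := by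
  rw [sub_eq_add_neg]; exact vge_add v hv_mul hv_add c x (-y) hx (vge_neg v hv_mul c y hy)

include hv_mul hv_add in
/-- exact propagation : if `y - x` is integral and `v y < 0` then `x ≠ 0` and `v x = v y`. -/
lemma v_shift (x y : L) (h : Vge v 0 (y - x)) (hy : y ≠ 0) (hyv : v y < 0) :
    x ≠ 0 ∧ v x = v y := by
  by_cases hd : y - x = 0
  · have : x = y := by linear_combination -hd
    constructor <;> simp [this, hy]
  have hdv : 0 ≤ v (y - x) := h.resolve_left hd
  have hx0 : x ≠ 0 := by
    rintro rfl
    simp only [sub_zero] at hdv; omega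
  refine ⟨hx0, ?_⟩
  have h1 : min (v y) (v (x - y)) ≤ v x := by
    have := hv_add y (x - y) hy (by intro h; apply hd; linear_combination -h) (by simpa using hx0)
    simpa using this
  have hxy : v (x - y) = v (y - x) := by
    have : x - y = -(y - x) := by ring
    rw [this, v_neg' v hv_mul _ hd]
  rw [hxy] at h1
  have h1' : v y ≤ v x := by omega
  have h2 : min (v x) (v (y - x)) ≤ v y := by
    have := hv_add x (y - x) hx0 hd (by simpa using hy)
    simpa using this
  omega

include hv_mul ht0 ht1 in
lemma v_tmul (x : L) (hx : x ≠ 0) : v (t * x) = v x + 1 := by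
  rw [hv_mul t x ht0 hx, ht1]; ring

include hv_mul ht0 ht1 in
lemma v_tinv : v t⁻¹ = -1 := by
  have := hv_mul t t⁻¹ ht0 (inv_ne_zero ht0)
  rw [mul_inv_cancel₀ ht0, v_one' v hv_mul, ht1] at this
  omega

end Val
-- extra Vge utilities (to append to section)
section Val2
variable {L : Type*} [Field L] (v : L → ℤ) (t : L)
variable (hv_mul : ∀ x y : L, x ≠ 0 → y ≠ 0 → v (x * y) = v x + v y)
variable (ht0 : t ≠ 0) (ht1 : v t = 1)

lemma vge_zero (c : ℤ) : Vge v c (0 : L) := Or.inl rfl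

lemma vge_mono {c c' : ℤ} (h : c' ≤ c) {x : L} (hx : Vge v c x) : Vge v c' x :=
  hx.imp id (fun h' => le_trans h h')

include hv_mul ht0 ht1 in
lemma vge_tscale (c : ℤ) (x : L) : Vge v (c + 1) (t * x) ↔ Vge v c x := by
  constructor
  · rintro (h | h)
    · exact Or.inl ((mul_eq_zero.mp h).resolve_left ht0)
    · by_cases hx : x = 0; · exact Or.inl hx
      · right; rw [v_tmul v t hv_mul ht0 ht1 x hx] at h; omega
  · rintro (rfl | h)
    · exact Or.inl (mul_zero t)
    · by_cases hx : x = 0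
      · exact Or.inl (by rw [hx, mul_zero])
      · right; rw [v_tmul v t hv_mul ht0 ht1 x hx]; omega

lemma vge_sigma (σ : L ≃+* L) (hσv : ∀ x : L, x ≠ 0 → v (σ x) = v x) (c : ℤ) (x : L)
    (hx : Vge v c x) : Vge v c (σ x) := by
  rcases hx with rfl | hx; · exact Or.inl (map_zero σ)
  by_cases h0 : x = 0; · exact Or.inl (by rw [h0, map_zero])
  exact Or.inr (by rw [hσv x h0]; exact hx)

end Val2
lemma key_lemma {L : Type*} [Field L] (v : L → ℤ) (t : L)
    (hv_mul : ∀ x y : L, x ≠ 0 → y ≠ 0 → v (x * y) = v x + v y)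
    (hv_add : ∀ x y : L, x ≠ 0 → y ≠ 0 → x + y ≠ 0 → min (v x) (v y) ≤ v (x + y))
    (ht0 : t ≠ 0) (ht1 : v t = 1)
    (σ : L ≃+* L) (hσv : ∀ x : L, x ≠ 0 → v (σ x) = v x)
    (n m : ℕ) (hn : 2 ≤ n) (hnm : n < m)
    (c : ℕ → ℕ → L)
    (hc_out : ∀ a b, n ≤ a ∨ m ≤ b → c a b = 0)
    (R1 : ∀ a b, a + 1 < n → b + 1 < m → Vge v 0 (σ (c a b) - c (a+1) (b+1)))
    (R2 : ∀ a, a + 1 < n → Vge v 0 (t * σ (c a (m-1)) - c (a+1) 0))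
    (R3 : ∀ b, b + 1 < m → Vge v 0 (σ (c (n-1) b) - t * c 0 (b+1)))
    (R4 : Vge v 0 (σ (c (n-1) (m-1)) - c 0 0)) :
    (∀ a b, Vge v (-1) (c a b)) ∧
    ((∀ r, r + 1 < n → Vge v 0 (c r (m-1))) → ∀ a b, Vge v 0 (c a b)) := by
  have hσ0 : ∀ x : L, x ≠ 0 → σ x ≠ 0 := fun x hx h =>
    hx (by simpa using (EmbeddingLike.map_eq_zero_iff).mp h)
  -- exact propagation steps
  have E1 : ∀ a b, a + 1 < n → b + 1 < m → c a b ≠ 0 → v (c a b) < 0 →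
      c (a+1) (b+1) ≠ 0 ∧ v (c (a+1) (b+1)) = v (c a b) := by
    intro a b ha hb h0 hv
    have := v_shift v hv_mul hv_add (c (a+1) (b+1)) (σ (c a b)) (R1 a b ha hb)
      (hσ0 _ h0) (by rw [hσv _ h0]; exact hv)
    rwa [hσv _ h0] at this
  have E2 : ∀ a, a + 1 < n → c a (m-1) ≠ 0 → v (c a (m-1)) < -1 →
      c (a+1) 0 ≠ 0 ∧ v (c (a+1) 0) = v (c a (m-1)) + 1 := by
    intro a ha h0 hv
    have hy0 : t * σ (c a (m-1)) ≠ 0 := mul_ne_zero ht0 (hσ0 _ h0)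
    have hyv : v (t * σ (c a (m-1))) = v (c a (m-1)) + 1 := by
      rw [v_tmul v t hv_mul ht0 ht1 _ (hσ0 _ h0), hσv _ h0]
    have := v_shift v hv_mul hv_add (c (a+1) 0) _ (R2 a ha) hy0 (by omega)
    rw [hyv] at this; exact this
  have E3 : ∀ b, b + 1 < m → c (n-1) b ≠ 0 → v (c (n-1) b) < 0 →
      c 0 (b+1) ≠ 0 ∧ v (c 0 (b+1)) = v (c (n-1) b) - 1 := by
    intro b hb h0 hv
    have := v_shift v hv_mul hv_add (t * c 0 (b+1)) _ (R3 b hb)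
      (hσ0 _ h0) (by rw [hσv _ h0]; exact hv)
    rw [hσv _ h0] at this
    have hc0 : c 0 (b+1) ≠ 0 := by
      intro h; rw [h, mul_zero] at this; exact this.1 rfl
    refine ⟨hc0, ?_⟩
    have := this.2
    rw [v_tmul v t hv_mul ht0 ht1 _ hc0] at this
    omega
  have E4 : c (n-1) (m-1) ≠ 0 → v (c (n-1) (m-1)) < 0 →
      c 0 0 ≠ 0 ∧ v (c 0 0) = v (c (n-1) (m-1)) := by
    intro h0 hv
    have := v_shift v hv_mul hv_add (c 0 0) _ R4 (hσ0 _ h0) (by rw [hσv _ h0]; exact hv)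
    rwa [hσv _ h0] at this
  -- diagonal propagation
  have L1 : ∀ k a b, a + k < n → b + k < m → c a b ≠ 0 → v (c a b) < 0 →
      c (a+k) (b+k) ≠ 0 ∧ v (c (a+k) (b+k)) = v (c a b) := by
    intro k
    induction k with
    | zero => intro a b _ _ h0 _; exact ⟨h0, rfl⟩
    | succ k ih =>
      intro a b ha hb h0 hv
      obtain ⟨h0', hv'⟩ := ih a b (by omega) (by omega) h0 hv
      have := E1 (a+k) (b+k) (by omega) (by omega) h0' (by omega)
      refine ⟨by rw [show a+(k+1) = a+k+1 by omega, show b+(k+1) = b+k+1 by omega]; exact this.1, ?_⟩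
      rw [show a+(k+1) = a+k+1 by omega, show b+(k+1) = b+k+1 by omega, this.2, hv']
  -- minimal entries reach the last column strictly above the bottom row
  have L4 : ∀ μ : ℤ, μ < 0 → (∀ a b, c a b ≠ 0 → μ ≤ v (c a b)) →
      ∀ a b, b < m → c a b ≠ 0 → v (c a b) = μ →
      a + m < b + n ∧ c (a+(m-1)-b) (m-1) ≠ 0 ∧ v (c (a+(m-1)-b) (m-1)) = μ := by
    intro μ hμneg hμle a b hb h0 hveq
    have ha : a < n := by
      by_contra h; exact h0 (hc_out a b (Or.inl (by omega)))
    by_cases hcase : b + n ≤ a + m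
    · exfalso
      have hL := L1 (n-1-a) a b (by omega) (by omega) h0 (by omega)
      rw [show a + (n-1-a) = n-1 by omega] at hL
      set s := b + (n-1-a) with hs
      have hsm : s < m := by omega
      by_cases hs1 : s + 1 < m
      · obtain ⟨h0', hv'⟩ := E3 s hs1 hL.1 (by omega)
        have := hμle 0 (s+1) h0'
        omega
      · have hsm1 : s = m - 1 := by omega
        rw [hsm1] at hL
        obtain ⟨h0', hv'⟩ := E4 hL.1 (by omega)
        have hL2 := L1 (n-1) 0 0 (by omega) (by omega) h0' (by omega)
        simp only [Nat.zero_add] at hL2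
        obtain ⟨h0'', hv''⟩ := E3 (n-1) (by omega) hL2.1 (by omega)
        have := hμle 0 (n-1+1) h0''
        omega
    · have hL := L1 (m-1-b) a b (by omega) (by omega) h0 (by omega)
      rw [show b + (m-1-b) = m-1 by omega] at hL
      exact ⟨by omega, by rw [show a+(m-1)-b = a+(m-1-b) by omega]; exact ⟨hL.1, by omega⟩⟩
  -- the minimum machinery
  have setup : ∀ a₀ b₀, c a₀ b₀ ≠ 0 → v (c a₀ b₀) < 0 →
      ∃ μ : ℤ, μ < 0 ∧ μ ≤ v (c a₀ b₀) ∧ (∀ a b, c a b ≠ 0 → μ ≤ v (c a b)) ∧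
        ∃ a b, b < m ∧ c a b ≠ 0 ∧ v (c a b) = μ := by
    intro a₀ b₀ h0 hv
    classical
    set T : Finset ℤ :=
      ((Finset.range n ×ˢ Finset.range m).filter fun p => c p.1 p.2 ≠ 0).image
        fun p => v (c p.1 p.2) with hT
    have hmem : ∀ a b, c a b ≠ 0 → v (c a b) ∈ T := by
      intro a b h
      have ha : a < n := by by_contra hh; exact h (hc_out a b (Or.inl (by omega)))
      have hb : b < m := by by_contra hh; exact h (hc_out a b (Or.inr (by omega)))
      exact Finset.mem_image.mpr ⟨(a, b), Finset.mem_filter.mpr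
        ⟨Finset.mem_product.mpr ⟨Finset.mem_range.mpr ha, Finset.mem_range.mpr hb⟩, h⟩, rfl⟩
    have hne : T.Nonempty := ⟨_, hmem a₀ b₀ h0⟩
    refine ⟨T.min' hne, ?_, T.min'_le _ (hmem a₀ b₀ h0), fun a b h => T.min'_le _ (hmem a b h), ?_⟩
    · have := T.min'_le _ (hmem a₀ b₀ h0); omega
    · obtain ⟨p, hp, hpv⟩ := Finset.mem_image.mp (T.min'_mem hne)
      obtain ⟨hp1, hp2⟩ := Finset.mem_filter.mp hp
      exact ⟨p.1, p.2, Finset.mem_range.mp (Finset.mem_product.mp hp1).2, hp2, hpv⟩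
  constructor
  · -- every entry has valuation ≥ -1
    intro a b
    by_cases h0 : c a b = 0; · exact Or.inl h0
    right
    by_contra hbad
    push_neg at hbad
    obtain ⟨μ, hμneg, hμa, hμle, a', b', hb', h0', hveq'⟩ := setup a b h0 (by omega)
    have hμ2 : μ ≤ -2 := by omega
    obtain ⟨_, hr0, hr0v⟩ := L4 μ hμneg hμle a' b' hb' h0' hveq'
    set r₀ := a' + (m-1) - b' with hr₀
    have hr₀n : r₀ + 1 < n := by omega
    -- stepping lemma: from a minimal last-column entry produce a strictly lower one
    have step : ∀ r, r + 1 < n → c r (m-1) ≠ 0 → v (c r (m-1)) = μ →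
        ∃ r₂, r < r₂ ∧ r₂ + 1 < n ∧ c r₂ (m-1) ≠ 0 ∧ v (c r₂ (m-1)) = μ := by
      intro r hr h0r hvr
      obtain ⟨h1, hv1⟩ := E2 r hr h0r (by omega)
      have hL := L1 (n-2-r) (r+1) 0 (by omega) (by omega) h1 (by omega)
      rw [show r+1 + (n-2-r) = n-1 by omega, Nat.zero_add] at hL
      obtain ⟨h2, hv2⟩ := E3 (n-2-r) (by omega) hL.1 (by omega)
      rw [show n-2-r+1 = n-1-r by omega] at h2 hv2
      obtain ⟨hlt, h3, hv3⟩ := L4 μ hμneg hμle 0 (n-1-r) (by omega) h2 (by omega)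
      refine ⟨0 + (m-1) - (n-1-r), by omega, by omega, h3, hv3⟩
    have noR : ∀ k r, n - 1 - r ≤ k → r + 1 < n → c r (m-1) ≠ 0 → v (c r (m-1)) = μ → False := by
      intro k
      induction k with
      | zero => intro r hk hr _ _; omega
      | succ k ih =>
        intro r hk hr h0r hvr
        obtain ⟨r₂, hlt, hr₂, h₂, hv₂⟩ := step r hr h0r hvr
        exact ih r₂ (by omega) hr₂ h₂ hv₂
    exact noR n r₀ (by omega) hr₀n hr0 hr0v
  · -- if the free last-column entries are integral then everything is
    intro hfree a b
    by_cases h0 : c a b = 0; · exact Or.inl h0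
    right
    by_contra hbad
    push_neg at hbad
    obtain ⟨μ, hμneg, hμa, hμle, a', b', hb', h0', hveq'⟩ := setup a b h0 (by omega)
    obtain ⟨hlt, hr0, hr0v⟩ := L4 μ hμneg hμle a' b' hb' h0' hveq'
    have := hfree (a' + (m-1) - b') (by omega)
    rcases this with h | h
    · exact hr0 h
    · omega
theorem stmt_11 {L : Type*} [Field L] (v : L → ℤ) (t : L)
    (hv_mul : ∀ x y : L, x ≠ 0 → y ≠ 0 → v (x * y) = v x + v y)
    (hv_add : ∀ x y : L, x ≠ 0 → y ≠ 0 → x + y ≠ 0 → min (v x) (v y) ≤ v (x + y))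
    (hv_surj : ∀ n : ℤ, ∃ x : L, x ≠ 0 ∧ v x = n)
    (ht0 : t ≠ 0) (ht1 : v t = 1)
    (O : Subring L) (hO : ∀ x : L, x ∈ O ↔ x = 0 ∨ 0 ≤ v x)
    (σ : L ≃+* L) (hσt : σ t = t) (hσv : ∀ x : L, x ≠ 0 → v (σ x) = v x)
    (n m : ℕ) (hn : 2 ≤ n) (hnm : n < m)
    (α : Fin n → ℤ) (hα : ∀ i, α i = if (i : ℕ) = 0 then 0 else 1)
    (β : Fin m → ℤ) (hβ : ∀ j, β j = if (j : ℕ) = m - 1 then 0 else 1)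
    (S : Set (Matrix (Fin n) (Fin m) L))
    (hS : S = {C | ∀ i j,
        (tau t n ^ (n - 1) * C.map ⇑σ - C * tau t m ^ (m - 1)) i j = 0 ∨
          min (α i) (β j) ≤ v ((tau t n ^ (n - 1) * C.map ⇑σ - C * tau t m ^ (m - 1)) i j)}) :
    -- `S` is an additive subgroup of `M_{n×m}(L)` containing `M_{n×m}(𝒪_L)`
    (0 ∈ S) ∧
    (∀ C₁ ∈ S, ∀ C₂ ∈ S, C₁ + C₂ ∈ S) ∧
    (∀ C ∈ S, -C ∈ S) ∧
    (∀ C : Matrix (Fin n) (Fin m) L, (∀ i j, C i j ∈ O) → C ∈ S) ∧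
    -- every `C ∈ S` has `c_{i,m} ∈ t⁻¹𝒪_L` for `1 ≤ i ≤ n−1`
    (∀ C ∈ S, ∀ i : Fin n, (i : ℕ) < n - 1 →
      C i (⟨m - 1, by omega⟩ : Fin m) ∈ t⁻¹ • (O : Set L)) ∧
    -- the last-column map separates points of `S` exactly modulo `M_{n×m}(𝒪_L)`
    (∀ C₁ ∈ S, ∀ C₂ ∈ S,
      ((∀ i : Fin (n - 1),
          (QuotientAddGroup.mk (C₁ (Fin.castLE (by omega) i) (⟨m - 1, by omega⟩ : Fin m)) :
              L ⧸ O.toAddSubgroup) =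
            QuotientAddGroup.mk (C₂ (Fin.castLE (by omega) i) (⟨m - 1, by omega⟩ : Fin m)))
        ↔ ∀ i j, (C₁ - C₂) i j ∈ O)) ∧
    -- the last-column map hits every element of `(t⁻¹𝒪_L/𝒪_L)^{n−1}`
    (∀ y : Fin (n - 1) → L ⧸ O.toAddSubgroup,
      (∀ i, ∃ c ∈ t⁻¹ • (O : Set L), QuotientAddGroup.mk c = y i) →
      ∃ C ∈ S, ∀ i : Fin (n - 1),
        (QuotientAddGroup.mk (C (Fin.castLE (by omega) i) (⟨m - 1, by omega⟩ : Fin m)) :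
            L ⧸ O.toAddSubgroup) = y i) := by
  classical
  subst hS
  -- translations of the valuation-ring membership
  have hOV : ∀ x : L, x ∈ O ↔ Vge v 0 x := hO
  have htinv : ∀ x : L, x ∈ t⁻¹ • (O : Set L) ↔ Vge v (-1) x := by
    intro x
    constructor
    · intro hx
      obtain ⟨o, ho, rfl⟩ := Set.mem_smul_set.mp hx
      by_cases ho0 : o = 0
      · left; simp [ho0]
      · right
        rw [smul_eq_mul, hv_mul _ _ (inv_ne_zero ht0) ho0, v_tinv v t hv_mul ht0 ht1]
        rcases (hO o).mp ho with rfl | hvo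
        · exact absurd rfl ho0
        · omega
    · intro hx
      by_cases hx0 : x = 0
      · exact ⟨0, (hO 0).mpr (Or.inl rfl), by simp [hx0]⟩
      · refine Set.mem_smul_set.mpr ⟨t * x, (hO _).mpr (Or.inr ?_), ?_⟩
        · rw [v_tmul v t hv_mul ht0 ht1 x hx0]
          rcases hx with h | h
          · exact absurd h hx0
          · omega
        · rw [smul_eq_mul, ← mul_assoc, inv_mul_cancel₀ ht0, one_mul]
  -- the min of the weights
  have hmin : ∀ (i : Fin n) (j : Fin m),
      min (α i) (β j) = if (i:ℕ) ≠ 0 ∧ (j:ℕ) ≠ m-1 then 1 else 0 := by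
    intro i j
    rw [hα, hβ]
    by_cases hi : (i:ℕ) = 0 <;> by_cases hj : (j:ℕ) = m-1 <;> simp [hi, hj]
  -- ℕ-indexed entries
  set ent : Matrix (Fin n) (Fin m) L → ℕ → ℕ → L := fun C a b =>
    if h : a < n ∧ b < m then C ⟨a, h.1⟩ ⟨b, h.2⟩ else 0 with hent
  have ent_eq : ∀ (C : Matrix (Fin n) (Fin m) L) a b (ha : a < n) (hb : b < m),
      ent C a b = C ⟨a, ha⟩ ⟨b, hb⟩ := by
    intro C a b ha hb; simp only [hent]; rw [dif_pos ⟨ha, hb⟩]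
  have ent_out : ∀ (C : Matrix (Fin n) (Fin m) L) a b, (n ≤ a ∨ m ≤ b) → ent C a b = 0 := by
    intro C a b h; simp only [hent]; rw [dif_neg (by omega)]
  -- the entrywise characterization of membership in S
  have hmemiff : ∀ C : Matrix (Fin n) (Fin m) L,
      (C ∈ {C : Matrix (Fin n) (Fin m) L | ∀ i j,
        (tau t n ^ (n - 1) * C.map ⇑σ - C * tau t m ^ (m - 1)) i j = 0 ∨
          min (α i) (β j) ≤ v ((tau t n ^ (n - 1) * C.map ⇑σ - C * tau t m ^ (m - 1)) i j)}) ↔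
      (∀ a b, a < n → b < m →
        Vge v (if a ≠ 0 ∧ b ≠ m-1 then 1 else 0)
          ((if a = 0 then σ (ent C (n-1) b) else t * σ (ent C (a-1) b)) -
           (if b = m-1 then ent C a 0 else t * ent C a (b+1)))) := by
    intro C
    constructor
    · intro hC a b ha hb
      have h : Vge v (min (α ⟨a, ha⟩) (β ⟨b, hb⟩))
          ((tau t n ^ (n - 1) * C.map ⇑σ - C * tau t m ^ (m - 1)) ⟨a, ha⟩ ⟨b, hb⟩) :=
        hC ⟨a, ha⟩ ⟨b, hb⟩
      rw [hmat_apply t σ hn hnm C, hmin] at h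
      by_cases ha0 : a = 0 <;> by_cases hbm : b = m-1
      · rw [dif_pos hbm, if_pos ha0] at h
        rw [if_pos ha0, if_pos hbm, ent_eq C (n-1) b (by omega) hb, ent_eq C a 0 ha (by omega)]
        exact h
      · rw [dif_neg hbm, if_pos ha0] at h
        rw [if_pos ha0, if_neg hbm, ent_eq C (n-1) b (by omega) hb,
          ent_eq C a (b+1) ha (by omega)]
        exact h
      · rw [dif_pos hbm, if_neg ha0] at h
        rw [if_neg ha0, if_pos hbm, ent_eq C (a-1) b (by omega) hb, ent_eq C a 0 ha (by omega)]
        exact h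
      · rw [dif_neg hbm, if_neg ha0] at h
        rw [if_neg ha0, if_neg hbm, ent_eq C (a-1) b (by omega) hb,
          ent_eq C a (b+1) ha (by omega)]
        exact h
    · intro hC i j
      have h := hC (i : ℕ) (j : ℕ) i.isLt j.isLt
      show Vge v _ _
      rw [hmat_apply t σ hn hnm C, hmin]
      by_cases ha0 : (i:ℕ) = 0 <;> by_cases hbm : (j:ℕ) = m-1
      · rw [if_pos ha0, if_pos hbm, ent_eq C (n-1) (j:ℕ) (by omega) j.isLt,
          ent_eq C (i:ℕ) 0 i.isLt (by omega)] at h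
        rw [dif_pos hbm, if_pos ha0]
        exact h
      · rw [if_pos ha0, if_neg hbm, ent_eq C (n-1) (j:ℕ) (by omega) j.isLt,
          ent_eq C (i:ℕ) ((j:ℕ)+1) i.isLt (by omega)] at h
        rw [dif_neg hbm, if_pos ha0]
        exact h
      · rw [if_neg ha0, if_pos hbm, ent_eq C ((i:ℕ)-1) (j:ℕ) (by omega) j.isLt,
          ent_eq C (i:ℕ) 0 i.isLt (by omega)] at h
        rw [dif_pos hbm, if_neg ha0]
        exact h
      · rw [if_neg ha0, if_neg hbm, ent_eq C ((i:ℕ)-1) (j:ℕ) (by omega) j.isLt,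
          ent_eq C (i:ℕ) ((j:ℕ)+1) i.isLt (by omega)] at h
        rw [dif_neg hbm, if_neg ha0]
        exact h
  -- extraction of the four relation families for C ∈ S
  have hR1 : ∀ C, (∀ a b, a < n → b < m →
        Vge v (if a ≠ 0 ∧ b ≠ m-1 then 1 else 0)
          ((if a = 0 then σ (ent C (n-1) b) else t * σ (ent C (a-1) b)) -
           (if b = m-1 then ent C a 0 else t * ent C a (b+1)))) →
      ∀ a b, a + 1 < n → b + 1 < m → Vge v 0 (σ (ent C a b) - ent C (a+1) (b+1)) := by
    intro C hC a b ha hb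
    have h := hC (a+1) b (by omega) (by omega)
    rw [if_neg (by omega : ¬ (a+1 = 0)), if_neg (by omega : ¬ (b = m-1)),
      if_pos ⟨by omega, by omega⟩, show a+1-1 = a from rfl, ← mul_sub] at h
    have h2 := (vge_tscale v t hv_mul ht0 ht1 0 _).mp (by rwa [show (0:ℤ)+1 = 1 from rfl])
    exact h2
  have hR2 : ∀ C, (∀ a b, a < n → b < m →
        Vge v (if a ≠ 0 ∧ b ≠ m-1 then 1 else 0)
          ((if a = 0 then σ (ent C (n-1) b) else t * σ (ent C (a-1) b)) -
           (if b = m-1 then ent C a 0 else t * ent C a (b+1)))) →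
      ∀ a, a + 1 < n → Vge v 0 (t * σ (ent C a (m-1)) - ent C (a+1) 0) := by
    intro C hC a ha
    have h := hC (a+1) (m-1) (by omega) (by omega)
    rw [if_neg (by omega : ¬ ((a+1 ≠ 0) ∧ (m-1 ≠ m-1))), if_neg (by omega : ¬ (a+1 = 0)),
      if_pos rfl, show a+1-1 = a from rfl] at h
    exact h
  have hR3 : ∀ C, (∀ a b, a < n → b < m →
        Vge v (if a ≠ 0 ∧ b ≠ m-1 then 1 else 0)
          ((if a = 0 then σ (ent C (n-1) b) else t * σ (ent C (a-1) b)) -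
           (if b = m-1 then ent C a 0 else t * ent C a (b+1)))) →
      ∀ b, b + 1 < m → Vge v 0 (σ (ent C (n-1) b) - t * ent C 0 (b+1)) := by
    intro C hC b hb
    have h := hC 0 b (by omega) (by omega)
    rw [if_neg (by omega : ¬ ((0 ≠ 0) ∧ (b ≠ m-1))), if_pos rfl,
      if_neg (by omega : ¬ (b = m-1))] at h
    exact h
  have hR4 : ∀ C, (∀ a b, a < n → b < m →
        Vge v (if a ≠ 0 ∧ b ≠ m-1 then 1 else 0)
          ((if a = 0 then σ (ent C (n-1) b) else t * σ (ent C (a-1) b)) -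
           (if b = m-1 then ent C a 0 else t * ent C a (b+1)))) →
      Vge v 0 (σ (ent C (n-1) (m-1)) - ent C 0 0) := by
    intro C hC
    have h := hC 0 (m-1) (by omega) (by omega)
    rw [if_neg (by omega : ¬ ((0 ≠ 0) ∧ (m-1 ≠ m-1))), if_pos rfl, if_pos rfl] at h
    exact h
  have hkey : ∀ C ∈ {C : Matrix (Fin n) (Fin m) L | ∀ i j,
        (tau t n ^ (n - 1) * C.map ⇑σ - C * tau t m ^ (m - 1)) i j = 0 ∨
          min (α i) (β j) ≤ v ((tau t n ^ (n - 1) * C.map ⇑σ - C * tau t m ^ (m - 1)) i j)},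
      (∀ a b, Vge v (-1) (ent C a b)) ∧
      ((∀ r, r + 1 < n → Vge v 0 (ent C r (m-1))) → ∀ a b, Vge v 0 (ent C a b)) := by
    intro C hC
    have h := (hmemiff C).mp hC
    exact key_lemma v t hv_mul hv_add ht0 ht1 σ hσv n m hn hnm (ent C) (ent_out C)
      (hR1 C h) (hR2 C h) (hR3 C h) (hR4 C h)
  -- closure properties
  have entz : ∀ a b, ent (0 : Matrix (Fin n) (Fin m) L) a b = 0 := by
    intro a b; simp only [hent]; split <;> simp
  have entadd : ∀ (C₁ C₂ : Matrix (Fin n) (Fin m) L) a b,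
      ent (C₁ + C₂) a b = ent C₁ a b + ent C₂ a b := by
    intro C₁ C₂ a b; simp only [hent]; split <;> simp [Matrix.add_apply]
  have entneg : ∀ (C : Matrix (Fin n) (Fin m) L) a b, ent (-C) a b = -(ent C a b) := by
    intro C a b; simp only [hent]; split <;> simp [Matrix.neg_apply]
  have h0S : (0 : Matrix (Fin n) (Fin m) L) ∈ {C : Matrix (Fin n) (Fin m) L | ∀ i j,
        (tau t n ^ (n - 1) * C.map ⇑σ - C * tau t m ^ (m - 1)) i j = 0 ∨
          min (α i) (β j) ≤ v ((tau t n ^ (n - 1) * C.map ⇑σ - C * tau t m ^ (m - 1)) i j)} := by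
    rw [hmemiff]
    intro a b ha hb
    simp only [entz, map_zero, mul_zero, ite_self, sub_zero]
    exact vge_zero v _
  have haddS : ∀ C₁ ∈ {C : Matrix (Fin n) (Fin m) L | ∀ i j,
        (tau t n ^ (n - 1) * C.map ⇑σ - C * tau t m ^ (m - 1)) i j = 0 ∨
          min (α i) (β j) ≤ v ((tau t n ^ (n - 1) * C.map ⇑σ - C * tau t m ^ (m - 1)) i j)},
      ∀ C₂ ∈ {C : Matrix (Fin n) (Fin m) L | ∀ i j,
        (tau t n ^ (n - 1) * C.map ⇑σ - C * tau t m ^ (m - 1)) i j = 0 ∨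
          min (α i) (β j) ≤ v ((tau t n ^ (n - 1) * C.map ⇑σ - C * tau t m ^ (m - 1)) i j)},
      C₁ + C₂ ∈ {C : Matrix (Fin n) (Fin m) L | ∀ i j,
        (tau t n ^ (n - 1) * C.map ⇑σ - C * tau t m ^ (m - 1)) i j = 0 ∨
          min (α i) (β j) ≤ v ((tau t n ^ (n - 1) * C.map ⇑σ - C * tau t m ^ (m - 1)) i j)} := by
    intro C₁ hC₁ C₂ hC₂
    rw [hmemiff] at hC₁ hC₂ ⊢
    intro a b ha hb
    have h := vge_add v hv_mul hv_add _ _ _ (hC₁ a b ha hb) (hC₂ a b ha hb)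
    convert h using 1
    by_cases ha0 : a = 0 <;> by_cases hbm : b = m-1 <;>
      simp [entadd, ha0, hbm, map_add] <;> ring
  have hnegS : ∀ C ∈ {C : Matrix (Fin n) (Fin m) L | ∀ i j,
        (tau t n ^ (n - 1) * C.map ⇑σ - C * tau t m ^ (m - 1)) i j = 0 ∨
          min (α i) (β j) ≤ v ((tau t n ^ (n - 1) * C.map ⇑σ - C * tau t m ^ (m - 1)) i j)},
      -C ∈ {C : Matrix (Fin n) (Fin m) L | ∀ i j,
        (tau t n ^ (n - 1) * C.map ⇑σ - C * tau t m ^ (m - 1)) i j = 0 ∨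
          min (α i) (β j) ≤ v ((tau t n ^ (n - 1) * C.map ⇑σ - C * tau t m ^ (m - 1)) i j)} := by
    intro C hC
    rw [hmemiff] at hC ⊢
    intro a b ha hb
    have h := vge_neg v hv_mul _ _ (hC a b ha hb)
    convert h using 1
    by_cases ha0 : a = 0 <;> by_cases hbm : b = m-1 <;>
      simp [entneg, ha0, hbm, map_neg] <;> ring
  have hVt : ∀ x : L, Vge v 0 x → Vge v 0 (t * x) := fun x hx =>
    vge_mono v (by omega) ((vge_tscale v t hv_mul ht0 ht1 0 x).mpr hx)
  have hVt1 : ∀ x : L, Vge v (-1) x → Vge v 0 (t * x) := by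
    intro x hx
    have := (vge_tscale v t hv_mul ht0 ht1 (-1) x).mpr hx
    rwa [show (-1:ℤ)+1 = 0 by ring] at this
  refine ⟨h0S, haddS, hnegS, ?_, ?_, ?_, ?_⟩
  · -- O-matrices are in S
    intro C hCO
    rw [hmemiff]
    intro a b ha hb
    have hV : ∀ a b, Vge v 0 (ent C a b) := by
      intro a b
      simp only [hent]
      split
      · exact (hOV _).mp (hCO _ _)
      · exact vge_zero v _
    by_cases ha0 : a = 0 <;> by_cases hbm : b = m-1
    · rw [if_pos ha0, if_pos hbm, if_neg (by omega : ¬ (a ≠ 0 ∧ b ≠ m-1))]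
      exact vge_sub v hv_mul hv_add _ _ _ (vge_sigma v σ hσv _ _ (hV _ _)) (hV _ _)
    · rw [if_pos ha0, if_neg hbm, if_neg (by omega : ¬ (a ≠ 0 ∧ b ≠ m-1))]
      exact vge_sub v hv_mul hv_add _ _ _ (vge_sigma v σ hσv _ _ (hV _ _)) (hVt _ (hV _ _))
    · rw [if_neg ha0, if_pos hbm, if_neg (by omega : ¬ (a ≠ 0 ∧ b ≠ m-1))]
      exact vge_sub v hv_mul hv_add _ _ _ (hVt _ (vge_sigma v σ hσv _ _ (hV _ _))) (hV _ _)
    · rw [if_neg ha0, if_neg hbm, if_pos ⟨ha0, hbm⟩, ← mul_sub,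
        show (1:ℤ) = 0+1 from rfl]
      exact (vge_tscale v t hv_mul ht0 ht1 0 _).mpr
        (vge_sub v hv_mul hv_add _ _ _ (vge_sigma v σ hσv _ _ (hV _ _)) (hV _ _))
  · -- last-column entries lie in t⁻¹O
    intro C hC i hi
    rw [htinv]
    have h := (hkey C hC).1 (i : ℕ) (m-1)
    rw [ent_eq C (i:ℕ) (m-1) i.isLt (by omega)] at h
    exact h
  · -- separation modulo integral matrices
    intro C₁ hC₁ C₂ hC₂
    constructor
    · intro hq i j
      have hC12 : C₁ - C₂ ∈ {C : Matrix (Fin n) (Fin m) L | ∀ i j,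
          (tau t n ^ (n - 1) * C.map ⇑σ - C * tau t m ^ (m - 1)) i j = 0 ∨
            min (α i) (β j) ≤ v ((tau t n ^ (n - 1) * C.map ⇑σ - C * tau t m ^ (m - 1)) i j)} := by
        rw [sub_eq_add_neg]
        exact haddS C₁ hC₁ (-C₂) (hnegS C₂ hC₂)
      have hfree : ∀ r, r + 1 < n → Vge v 0 (ent (C₁ - C₂) r (m-1)) := by
        intro r hr
        have hq' := QuotientAddGroup.eq.mp (hq ⟨r, by omega⟩)
        rw [ent_eq _ r (m-1) (by omega) (by omega), Matrix.sub_apply]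
        have hmem : Vge v 0 (-(C₁ (Fin.castLE (by omega) (⟨r, by omega⟩ : Fin (n-1)))
            (⟨m-1, by omega⟩ : Fin m)) + C₂ (Fin.castLE (by omega) (⟨r, by omega⟩ : Fin (n-1)))
            (⟨m-1, by omega⟩ : Fin m)) := (hOV _).mp hq'
        have h2 := vge_neg v hv_mul 0 _ hmem
        rw [neg_add_rev, neg_neg] at h2
        have h3 : C₁ (⟨r, by omega⟩ : Fin n) (⟨m-1, by omega⟩ : Fin m) -
            C₂ (⟨r, by omega⟩ : Fin n) (⟨m-1, by omega⟩ : Fin m) =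
            -(C₂ (Fin.castLE (by omega) (⟨r, by omega⟩ : Fin (n-1))) (⟨m-1, by omega⟩ : Fin m)) +
            C₁ (Fin.castLE (by omega) (⟨r, by omega⟩ : Fin (n-1))) (⟨m-1, by omega⟩ : Fin m) := by
          rw [show (Fin.castLE (by omega : n - 1 ≤ n) (⟨r, by omega⟩ : Fin (n-1))) =
            (⟨r, by omega⟩ : Fin n) from rfl]
          ring
        rw [h3]
        exact h2
      have hall := (hkey _ hC12).2 hfree (i : ℕ) (j : ℕ)
      rw [ent_eq _ _ _ i.isLt j.isLt] at hall
      exact (hOV _).mpr hall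
    · intro hsub i
      refine QuotientAddGroup.eq.mpr ?_
      have h := hsub (Fin.castLE (by omega) i) (⟨m-1, by omega⟩ : Fin m)
      rw [Matrix.sub_apply] at h
      have h2 := vge_neg v hv_mul 0 _ ((hOV _).mp h)
      refine (hOV _).mpr ?_
      rw [show -(C₁ (Fin.castLE (by omega) i) (⟨m-1, by omega⟩ : Fin m)) +
          C₂ (Fin.castLE (by omega) i) (⟨m-1, by omega⟩ : Fin m) =
          -(C₁ (Fin.castLE (by omega) i) (⟨m-1, by omega⟩ : Fin m) -
            C₂ (Fin.castLE (by omega) i) (⟨m-1, by omega⟩ : Fin m)) by ring]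
      exact h2
  · -- surjectivity onto (t⁻¹O/O)^{n-1}
    intro y hy
    choose d hd1 hd2 using hy
    have hd1' : ∀ i, Vge v (-1) (d i) := fun i => (htinv _).mp (hd1 i)
    have iter0 : ∀ k : ℕ, (⇑σ.symm)^[k] (0 : L) = 0 := by
      intro k
      induction k with
      | zero => rfl
      | succ k ih => rw [Function.iterate_succ_apply, map_zero, ih]
    have iterv : ∀ (k : ℕ) (x : L), x ≠ 0 →
        (⇑σ.symm)^[k] x ≠ 0 ∧ v ((⇑σ.symm)^[k] x) = v x := by
      intro k
      induction k with
      | zero => intro x hx; exact ⟨hx, rfl⟩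
      | succ k ih =>
        intro x hx
        have h1 : σ.symm x ≠ 0 := fun h => hx (by
          have := congrArg σ h
          rwa [RingEquiv.apply_symm_apply, map_zero] at this)
        have h2 : v (σ.symm x) = v x := by
          have h := hσv (σ.symm x) h1
          rw [RingEquiv.apply_symm_apply] at h
          exact h.symm
        obtain ⟨ha, hb⟩ := ih (σ.symm x) h1
        rw [Function.iterate_succ_apply]
        exact ⟨ha, by rw [hb, h2]⟩
    have iterVge : ∀ (k : ℕ) (c : ℤ) (x : L), Vge v c x → Vge v c ((⇑σ.symm)^[k] x) := by
      intro k c x hx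
      by_cases hx0 : x = 0
      · left; rw [hx0, iter0]
      · rcases hx with rfl | hx
        · left; rw [iter0]
        · right; rw [(iterv k x hx0).2]; exact hx
    set CC : Matrix (Fin n) (Fin m) L := Matrix.of fun a b =>
      if h : (a:ℕ) + m < (b:ℕ) + n then
        (⇑σ.symm)^[m-1-(b:ℕ)] (d ⟨(a:ℕ)+(m-1)-(b:ℕ), by omega⟩) else 0 with hCC
    have entCC : ∀ a b (ha : a < n) (hb : b < m),
        ent CC a b = if h : a + m < b + n then
          (⇑σ.symm)^[m-1-b] (d ⟨a+(m-1)-b, by omega⟩) else 0 := by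
      intro a b ha hb
      rw [ent_eq _ _ _ ha hb]
      rfl
    have hVCC : ∀ a b, Vge v (-1) (ent CC a b) := by
      intro a b
      by_cases hin : a < n ∧ b < m
      · rw [entCC a b hin.1 hin.2]
        split
        · exact iterVge _ _ _ (hd1' _)
        · exact vge_zero v _
      · rw [ent_out _ _ _ (by omega)]
        exact vge_zero v _
    have hCCS : CC ∈ {C : Matrix (Fin n) (Fin m) L | ∀ i j,
        (tau t n ^ (n - 1) * C.map ⇑σ - C * tau t m ^ (m - 1)) i j = 0 ∨
          min (α i) (β j) ≤ v ((tau t n ^ (n - 1) * C.map ⇑σ - C * tau t m ^ (m - 1)) i j)} := by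
      rw [hmemiff]
      intro a b ha hb
      by_cases ha0 : a = 0 <;> by_cases hbm : b = m-1
      · -- corner : both entries vanish
        rw [if_pos ha0, if_pos hbm, if_neg (by omega : ¬ (a ≠ 0 ∧ b ≠ m-1)),
          entCC (n-1) b (by omega) hb, dif_neg (by omega : ¬ (n-1 + m < b + n)),
          entCC a 0 ha (by omega), dif_neg (by omega : ¬ (a + m < 0 + n)), map_zero, sub_zero]
        exact vge_zero v _
      · -- top row
        rw [if_pos ha0, if_neg hbm, if_neg (by omega : ¬ (a ≠ 0 ∧ b ≠ m-1)),
          entCC (n-1) b (by omega) hb, dif_neg (by omega : ¬ (n-1 + m < b + n)), map_zero,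
          zero_sub]
        exact vge_neg v hv_mul _ _ (hVt1 _ (hVCC a (b+1)))
      · -- last column
        rw [if_neg ha0, if_pos hbm, if_neg (by omega : ¬ (a ≠ 0 ∧ b ≠ m-1)),
          entCC a 0 ha (by omega), dif_neg (by omega : ¬ (a + m < 0 + n)), sub_zero,
          entCC (a-1) b (by omega) hb, dif_pos (by omega : a-1 + m < b + n)]
        rw [show m-1-b = 0 by omega, Function.iterate_zero_apply]
        exact hVt1 _ (vge_sigma v σ hσv _ _ (hd1' _))
      · -- interior : exact cancellation
        rw [if_neg ha0, if_neg hbm, if_pos ⟨ha0, hbm⟩,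
          entCC (a-1) b (by omega) hb, entCC a (b+1) ha (by omega)]
        by_cases hdg : a - 1 + m < b + n
        · rw [dif_pos hdg, dif_pos (by omega : a + m < (b+1) + n)]
          have heq : σ ((⇑σ.symm)^[m-1-b] (d ⟨a-1+(m-1)-b, by omega⟩)) =
              (⇑σ.symm)^[m-1-(b+1)] (d ⟨a+(m-1)-(b+1), by omega⟩) := by
            rw [show m-1-b = (m-1-(b+1))+1 by omega, Function.iterate_succ_apply',
              RingEquiv.apply_symm_apply]
            exact congrArg _ (congrArg d (Fin.ext (by simp only [Fin.val_mk]; omega)))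
          rw [heq, ← mul_sub, sub_self, mul_zero]
          exact vge_zero v _
        · rw [dif_neg hdg, dif_neg (by omega : ¬ (a + m < (b+1) + n)), map_zero, mul_zero, sub_zero]
          exact vge_zero v _
    refine ⟨CC, hCCS, ?_⟩
    intro i
    have hcc : CC (Fin.castLE (by omega) i) (⟨m-1, by omega⟩ : Fin m) = d i := by
      show (if h : (i:ℕ) + m < (m-1) + n then
        (⇑σ.symm)^[m-1-(m-1)] (d ⟨(i:ℕ)+(m-1)-(m-1), by omega⟩) else 0) = d i
      rw [dif_pos (by omega : (i:ℕ) + m < (m-1) + n),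
        show m-1-(m-1) = 0 by omega, Function.iterate_zero_apply]
      exact congrArg d (Fin.ext (by simp only [Fin.val_mk]; omega))
    rw [hcc]
    exact hd2 i
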